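/- Let C be a triangulated category endowed with a weight structure w, and let l ≤ m be integers. Then the class C_{[l,m]} := C_{w≥l} ∩ C_{w≤m} is the smallest subclass of objects of C that contains C_{w=j} for all l ≤ j ≤ m, is closed under retracts, and is extension-closed (contains 0 and, for any distinguished triangle A → B → C with A and C in the class, contains B). -/

import Mathlib

open CategoryTheory CategoryTheory.Limits CategoryTheory.Pretriangulated CategoryTheory.Category
open scoped ZeroObject

universe w v u

/-- `X` is a retract of `Y`: the identity of `X` factors through `Y`. -/
def IsRetract {D : Type*} [Category D] (X Y : D) : Prop :=
  ∃ (i : X ⟶ Y) (r : Y ⟶ X), i ≫ r = 𝟙 X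

/-- A weight structure on a triangulated category `C`. -/
structure WeightStructure (C : Type u) [Category.{v} C] [Preadditive C] [HasZeroObject C]
    [HasShift C ℤ] [∀ n : ℤ, (shiftFunctor C n).Additive] [Pretriangulated C] where
  /-- the class `C_{w≤0}` -/
  LE : Set C
  /-- the class `C_{w≥0}` -/
  GE : Set C
  le_retract : ∀ ⦃X Y : C⦄, IsRetract X Y → Y ∈ LE → X ∈ LE
  ge_retract : ∀ ⦃X Y : C⦄, IsRetract X Y → Y ∈ GE → X ∈ GE
  le_shift : ∀ X : C, X ∈ LE → X⟦(-1 : ℤ)⟧ ∈ LE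
  ge_shift : ∀ X : C, X ∈ GE → X⟦(1 : ℤ)⟧ ∈ GE
  orthogonal : ∀ ⦃X Y : C⦄, X ∈ LE → Y ∈ GE → ∀ f : X ⟶ Y⟦(1 : ℤ)⟧, f = 0
  exists_decomp : ∀ M : C, ∃ (B A : C) (f : B ⟶ M) (g : M ⟶ A) (h : A ⟶ B⟦(1 : ℤ)⟧),
    B ∈ LE ∧ A⟦(-1 : ℤ)⟧ ∈ GE ∧ Triangle.mk f g h ∈ distTriang C

namespace WeightStructure

variable {C : Type u} [Category.{v} C] [Preadditive C] [HasZeroObject C]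
  [HasShift C ℤ] [∀ n : ℤ, (shiftFunctor C n).Additive] [Pretriangulated C]

/-- the class `C_{w≤i} = C_{w≤0}[i]` -/
def leSet (w : WeightStructure C) (i : ℤ) : Set C := {X : C | X⟦-i⟧ ∈ w.LE}

/-- the class `C_{w≥i} = C_{w≥0}[i]` -/
def geSet (w : WeightStructure C) (i : ℤ) : Set C := {X : C | X⟦-i⟧ ∈ w.GE}

/-- the class `C_{w=i} = C_{w≤i} ∩ C_{w≥i}` -/
def eqSet (w : WeightStructure C) (i : ℤ) : Set C := w.leSet i ∩ w.geSet i

end WeightStructure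

variable {C : Type u} [Category.{v} C] [Preadditive C] [HasZeroObject C]
  [HasShift C ℤ] [∀ n : ℤ, (shiftFunctor C n).Additive] [Pretriangulated C]

/-- A class of objects is extension-closed if it contains `0` and is stable under
extensions given by distinguished triangles. -/
def ExtensionClosed (S : Set C) : Prop :=
  (0 : C) ∈ S ∧
  ∀ (T : Triangle C), T ∈ (distTriang C) → T.obj₁ ∈ S → T.obj₃ ∈ S → T.obj₂ ∈ S


namespace WeightStructure

variable {C : Type u} [Category.{v} C] [Preadditive C] [HasZeroObject C]
  [HasShift C ℤ] [∀ n : ℤ, (shiftFunctor C n).Additive] [Pretriangulated C]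
variable (w : WeightStructure C)

lemma le_iso {X Y : C} (e : X ≅ Y) (h : Y ∈ w.LE) : X ∈ w.LE :=
  w.le_retract ⟨e.hom, e.inv, e.hom_inv_id⟩ h

lemma ge_iso {X Y : C} (e : X ≅ Y) (h : Y ∈ w.GE) : X ∈ w.GE :=
  w.ge_retract ⟨e.hom, e.inv, e.hom_inv_id⟩ h

lemma leSet_iso {i : ℤ} {X Y : C} (e : X ≅ Y) (h : Y ∈ w.leSet i) : X ∈ w.leSet i :=
  w.le_iso ((shiftFunctor C (-i)).mapIso e) h

lemma geSet_iso {i : ℤ} {X Y : C} (e : X ≅ Y) (h : Y ∈ w.geSet i) : X ∈ w.geSet i :=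
  w.ge_iso ((shiftFunctor C (-i)).mapIso e) h

lemma leSet_retract {i : ℤ} {X Y : C} (h : IsRetract X Y) (hY : Y ∈ w.leSet i) :
    X ∈ w.leSet i := by
  obtain ⟨f, r, hfr⟩ := h
  exact w.le_retract ⟨f⟦-i⟧', r⟦-i⟧', by rw [← CategoryTheory.Functor.map_comp, hfr, CategoryTheory.Functor.map_id]⟩ hY

lemma geSet_retract {i : ℤ} {X Y : C} (h : IsRetract X Y) (hY : Y ∈ w.geSet i) :
    X ∈ w.geSet i := by
  obtain ⟨f, r, hfr⟩ := h
  exact w.ge_retract ⟨f⟦-i⟧', r⟦-i⟧', by rw [← CategoryTheory.Functor.map_comp, hfr, CategoryTheory.Functor.map_id]⟩ hY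

lemma mem_leSet_shift {i : ℤ} {X : C} (h : X ∈ w.leSet i) (a : ℤ) :
    X⟦a⟧ ∈ w.leSet (i + a) :=
  w.le_iso (((shiftFunctorAdd' C a (-(i + a)) (-i) (by ring)).app X).symm) h

lemma mem_geSet_shift {i : ℤ} {X : C} (h : X ∈ w.geSet i) (a : ℤ) :
    X⟦a⟧ ∈ w.geSet (i + a) :=
  w.ge_iso (((shiftFunctorAdd' C a (-(i + a)) (-i) (by ring)).app X).symm) h

lemma leSet_mono {i j : ℤ} (hij : i ≤ j) : w.leSet i ⊆ w.leSet j := by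
  refine Int.le_induction (motive := fun k _ => w.leSet i ⊆ w.leSet k) (fun X hX => hX) ?_ j hij
  intro k _ ih X hX
  exact w.le_iso ((shiftFunctorAdd' C (-k) (-1) (-(k + 1)) (by ring)).app X)
    (w.le_shift _ (ih hX))

lemma geSet_anti {i j : ℤ} (hij : i ≤ j) : w.geSet j ⊆ w.geSet i := by
  refine Int.le_induction (motive := fun k _ => w.geSet k ⊆ w.geSet i) (fun X hX => hX) ?_ j hij
  intro k _ ih X hX
  exact ih (w.ge_iso ((shiftFunctorAdd' C (-(k + 1)) 1 (-k) (by ring)).app X)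
    (w.ge_shift _ hX))

lemma zero_mem_leSet (i : ℤ) : (0 : C) ∈ w.leSet i := by
  obtain ⟨B, A, f, g, h, hB, hA, hD⟩ := w.exists_decomp (0 : C)
  exact w.le_retract ⟨0, 0,
    (((shiftFunctor C (-i)).map_isZero (isZero_zero C)).eq_of_src _ _)⟩ hB

lemma zero_mem_geSet (i : ℤ) : (0 : C) ∈ w.geSet i := by
  obtain ⟨B, A, f, g, h, hB, hA, hD⟩ := w.exists_decomp (0 : C)
  exact w.ge_retract ⟨0, 0,
    (((shiftFunctor C (-i)).map_isZero (isZero_zero C)).eq_of_src _ _)⟩ hA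

lemma ortho {n : ℤ} {X Z : C} (hX : X ∈ w.leSet n) (hZ : Z ∈ w.geSet (n + 1))
    (f : X ⟶ Z) : f = 0 := by
  have e : Z⟦-n⟧ ≅ (Z⟦-(n + 1)⟧)⟦(1 : ℤ)⟧ := (shiftFunctorAdd' C (-(n + 1)) 1 (-n) (by ring)).app Z
  have h0 := w.orthogonal hX hZ (f⟦(-n)⟧' ≫ e.hom)
  have h2 : f⟦(-n)⟧' = 0 := by
    rw [← comp_id (f⟦(-n)⟧'), ← e.hom_inv_id, ← assoc, h0, zero_comp]
  exact (shiftFunctor C (-n)).map_injective (by rw [h2, Functor.map_zero])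

lemma leSet_ext {n : ℤ} {T : Triangle C} (hT : T ∈ distTriang C)
    (h1 : T.obj₁ ∈ w.leSet n) (h3 : T.obj₃ ∈ w.leSet n) : T.obj₂ ∈ w.leSet n := by
  obtain ⟨B, A, f, g, h, hB, hA, hD⟩ := w.exists_decomp (T.obj₂⟦-n⟧)
  have hD' : (Triangle.shiftFunctor C n).obj (Triangle.mk f g h) ∈ distTriang C :=
    Triangle.shift_distinguished _ hD n
  set T' := (Triangle.shiftFunctor C n).obj (Triangle.mk f g h) with hT'def
  have e : T'.obj₂ ≅ T.obj₂ := (shiftFunctorCompIsoId C (-n) n (by ring)).app T.obj₂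
  have hB' : T'.obj₁ ∈ w.leSet n :=
    w.le_iso ((shiftFunctorCompIsoId C n (-n) (by ring)).app B) hB
  have hA' : T'.obj₃ ∈ w.geSet (n + 1) :=
    w.ge_iso (((shiftFunctorAdd' C n (-(n + 1)) (-1) (by ring)).app A).symm) hA
  have hg : T'.mor₂ = 0 := by
    have hcomp : T.mor₁ ≫ (e.inv ≫ T'.mor₂) = 0 := w.ortho h1 hA' _
    obtain ⟨q, hq⟩ := Triangle.yoneda_exact₂ T hT (e.inv ≫ T'.mor₂) hcomp
    rw [w.ortho h3 hA' q, comp_zero] at hq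
    rw [← id_comp T'.mor₂, ← e.hom_inv_id, assoc, hq, comp_zero]
  obtain ⟨r, hr⟩ := Triangle.coyoneda_exact₂ T' hD' (𝟙 T'.obj₂)
    (by rw [hg, comp_zero])
  refine w.leSet_retract ⟨e.inv ≫ r, T'.mor₁ ≫ e.hom, ?_⟩ hB'
  rw [assoc, ← assoc r, ← hr, id_comp, e.inv_hom_id]

lemma geSet_ext {n : ℤ} {T : Triangle C} (hT : T ∈ distTriang C)
    (h1 : T.obj₁ ∈ w.geSet n) (h3 : T.obj₃ ∈ w.geSet n) : T.obj₂ ∈ w.geSet n := by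
  obtain ⟨B, A, f, g, h, hB, hA, hD⟩ := w.exists_decomp (T.obj₂⟦-(n - 1)⟧)
  have hD' : (Triangle.shiftFunctor C (n - 1)).obj (Triangle.mk f g h) ∈ distTriang C :=
    Triangle.shift_distinguished _ hD (n - 1)
  set T' := (Triangle.shiftFunctor C (n - 1)).obj (Triangle.mk f g h) with hT'def
  have e : T'.obj₂ ≅ T.obj₂ := (shiftFunctorCompIsoId C (-(n - 1)) (n - 1) (by ring)).app T.obj₂
  have hB' : T'.obj₁ ∈ w.leSet (n - 1) :=
    w.le_iso ((shiftFunctorCompIsoId C (n - 1) (-(n - 1)) (by ring)).app B) hB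
  have hA' : T'.obj₃ ∈ w.geSet n :=
    w.ge_iso (((shiftFunctorAdd' C (n - 1) (-n) (-1) (by ring)).app A).symm) hA
  have h1' : T.obj₁ ∈ w.geSet ((n - 1) + 1) := by rwa [sub_add_cancel]
  have h3' : T.obj₃ ∈ w.geSet ((n - 1) + 1) := by rwa [sub_add_cancel]
  have hi : T'.mor₁ ≫ e.hom = 0 := by
    have hc : (T'.mor₁ ≫ e.hom) ≫ T.mor₂ = 0 := w.ortho hB' h3' _
    obtain ⟨q, hq⟩ := Triangle.coyoneda_exact₂ T hT (T'.mor₁ ≫ e.hom) hc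
    rw [hq, w.ortho hB' h1' q, zero_comp]
  have hi0 : T'.mor₁ = 0 := by
    rw [← comp_id T'.mor₁, ← e.hom_inv_id, ← assoc, hi, zero_comp]
  obtain ⟨s, hs⟩ := Triangle.yoneda_exact₂ T' hD' (𝟙 T'.obj₂)
    (by rw [hi0, zero_comp])
  refine w.geSet_retract ⟨e.inv ≫ T'.mor₂, s ≫ e.hom, ?_⟩ hA'
  rw [assoc, ← assoc T'.mor₂, ← hs, id_comp, e.inv_hom_id]

lemma min_aux : ∀ n : ℕ, ∀ l : ℤ, ∀ S : Set C,
    (∀ j : ℤ, l ≤ j → j ≤ l + n → w.eqSet j ⊆ S) →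
    (∀ ⦃X Y : C⦄, IsRetract X Y → Y ∈ S → X ∈ S) →
    ExtensionClosed S →
    w.geSet l ∩ w.leSet (l + n) ⊆ S := by
  intro n
  induction n with
  | zero =>
    intro l S hjS hretr hext M hM
    refine hjS l le_rfl (by simp) ⟨?_, hM.1⟩
    simpa using hM.2
  | succ n ih =>
    intro l S hjS hretr hext M hM
    have hcast : ((n + 1 : ℕ) : ℤ) = (n : ℤ) + 1 := by push_cast; ring
    rw [hcast] at hM
    obtain ⟨hMg, hMl⟩ := hM
    obtain ⟨B, A, f, g, h, hB, hA, hD⟩ := w.exists_decomp (M⟦-l⟧)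
    have hD' : (Triangle.shiftFunctor C l).obj (Triangle.mk f g h) ∈ distTriang C :=
      Triangle.shift_distinguished _ hD l
    set T' := (Triangle.shiftFunctor C l).obj (Triangle.mk f g h) with hT'def
    have e : T'.obj₂ ≅ M := (shiftFunctorCompIsoId C (-l) l (by ring)).app M
    have hB1 : T'.obj₁ ∈ w.leSet l :=
      w.le_iso ((shiftFunctorCompIsoId C l (-l) (by ring)).app B) hB
    have hA1 : T'.obj₃ ∈ w.geSet (l + 1) :=
      w.ge_iso (((shiftFunctorAdd' C l (-(l + 1)) (-1) (by ring)).app A).symm) hA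
    have hN : T'.obj₂ ∈ w.geSet l := w.geSet_iso e hMg
    have hNl : T'.obj₂ ∈ w.leSet (l + ((n : ℤ) + 1)) := w.leSet_iso e hMl
    -- B⟦l⟧ ∈ geSet l via the inverse rotation
    have hB2 : T'.obj₁ ∈ w.geSet l := by
      refine w.geSet_ext (inv_rot_of_distTriang T' hD') ?_ hN
      have := w.mem_geSet_shift hA1 (-1)
      simpa using this
    -- A⟦l⟧ ∈ leSet (l + n + 1) via the rotation
    have hA2 : T'.obj₃ ∈ w.leSet (l + ((n : ℤ) + 1)) := by
      refine w.leSet_ext (rot_of_distTriang T' hD') hNl ?_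
      have := w.mem_leSet_shift hB1 1
      exact w.leSet_mono (by omega) this
    have hBS : T'.obj₁ ∈ S := hjS l le_rfl (by omega) ⟨hB1, hB2⟩
    have hAS : T'.obj₃ ∈ S := by
      refine ih (l + 1) S (fun j hj1 hj2 => hjS j (by omega) (by omega)) hretr hext ⟨hA1, ?_⟩
      rw [show (l + 1) + (n : ℤ) = l + ((n : ℤ) + 1) by ring]
      exact hA2
    exact hretr ⟨e.inv, e.hom, e.inv_hom_id⟩ (hext.2 T' hD' hBS hAS)

end WeightStructure

/-- Proposition 2.1.3(10): for `l ≤ m`, the class `C_{[l,m]} = C_{w≥l} ∩ C_{w≤m}` is the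
smallest retract-closed and extension-closed class of objects containing `C_{w=j}` for
all `l ≤ j ≤ m`. -/
theorem interval_is_smallest_class (w : WeightStructure C) (l m : ℤ) (hlm : l ≤ m) :
    ((∀ j : ℤ, l ≤ j → j ≤ m → w.eqSet j ⊆ w.geSet l ∩ w.leSet m) ∧
      (∀ ⦃X Y : C⦄, IsRetract X Y → Y ∈ w.geSet l ∩ w.leSet m → X ∈ w.geSet l ∩ w.leSet m) ∧
      ExtensionClosed (w.geSet l ∩ w.leSet m)) ∧
    (∀ S : Set C, (∀ j : ℤ, l ≤ j → j ≤ m → w.eqSet j ⊆ S) →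
      (∀ ⦃X Y : C⦄, IsRetract X Y → Y ∈ S → X ∈ S) →
      ExtensionClosed S →
      w.geSet l ∩ w.leSet m ⊆ S) := by
  constructor
  · refine ⟨fun j hj1 hj2 X hX => ⟨w.geSet_anti hj1 hX.2, w.leSet_mono hj2 hX.1⟩,
      fun X Y h hY => ⟨w.geSet_retract h hY.1, w.leSet_retract h hY.2⟩,
      ⟨w.zero_mem_geSet l, w.zero_mem_leSet m⟩,
      fun T hT h1 h3 => ⟨w.geSet_ext hT h1.1 h3.1, w.leSet_ext hT h1.2 h3.2⟩⟩
  · intro S hjS hretr hext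
    have hm : m = l + ((m - l).toNat : ℤ) := by omega
    rw [hm]
    exact w.min_aux (m - l).toNat l S (fun j hj1 hj2 => hjS j hj1 (by omega)) hretr hext
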